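/- Let r, n, s be positive integers and let H be an s×n matrix over ℤ_r = ZMod r such that the map u ↦ uH from (ℤ_r)^s to (ℤ_r)^n is injective. Let L := { x ∈ (ℤ_r)^n : H xᵀ = 0 } and L_⊥ := { uH : u ∈ (ℤ_r)^s }. Let w_0, …, w_{r−1} ∈ ℂ and define v_i := ∑_{k=0}^{r−1} w_k · e(ik/r) for i ∈ {0,…,r−1}. Then ∑_{x ∈ L} ∏_{i=0}^{r−1} w_i^{τ_i(x)} = (1/r^s) ∑_{y ∈ L_⊥} ∏_{i=0}^{r−1} v_i^{τ_i(y)}. -/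

import Mathlib

open scoped Classical
open Finset

/-- `e(x) = exp(2πi x)` -/
noncomputable def expu (x : ℝ) : ℂ := Complex.exp (2 * Real.pi * Complex.I * x)

/-- `τ_i(y)` for vectors over `ZMod r` : the number of components of `y` equal to `i`. -/
noncomputable def tauZ (r : ℕ) {n : ℕ} (i : Fin r) (y : Fin n → ZMod r) : ℕ :=
  (Finset.univ.filter (fun j => y j = ((i : ℕ) : ZMod r))).card

lemma expu_add (x y : ℝ) : expu (x + y) = expu x * expu y := by
  rw [expu, expu, expu, ← Complex.exp_add]
  push_cast
  ring_nf

lemma expu_zero : expu 0 = 1 := by simp [expu]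

lemma expu_nat (m : ℕ) : expu m = 1 := by
  rw [expu, show ((2:ℂ) * (Real.pi:ℂ) * Complex.I * (m:ℝ)) = (m:ℤ) * (2 * Real.pi * Complex.I) by
    push_cast; ring, Complex.exp_int_mul_two_pi_mul_I]

noncomputable def chiZ (r : ℕ) (a : ZMod r) : ℂ := expu ((a.val : ℝ) / r)

lemma chiZ_natCast (r : ℕ) [NeZero r] (m : ℕ) : chiZ r (m : ZMod r) = expu ((m : ℝ) / r) := by
  have hr : (r:ℝ) ≠ 0 := Nat.cast_ne_zero.mpr (NeZero.ne r)
  rw [chiZ, ZMod.val_natCast]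
  have h1 : (m : ℝ) / r = (m / r : ℕ) + ((m % r : ℕ) : ℝ) / r := by
    have : (m : ℝ) = ((r * (m / r) + m % r : ℕ) : ℝ) := by rw [Nat.div_add_mod]
    rw [this]
    push_cast
    field_simp
  rw [h1, expu_add, expu_nat, one_mul]

lemma chiZ_zero (r : ℕ) : chiZ r 0 = 1 := by simp [chiZ, expu_zero]

lemma chiZ_add (r : ℕ) [NeZero r] (a b : ZMod r) : chiZ r (a + b) = chiZ r a * chiZ r b := by
  have h : a + b = ((a.val + b.val : ℕ) : ZMod r) := by
    push_cast
    rw [ZMod.natCast_val, ZMod.natCast_val, ZMod.cast_id, ZMod.cast_id]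
  rw [h, chiZ_natCast]
  push_cast
  rw [add_div, expu_add, chiZ, chiZ]

lemma chiZ_sum (r : ℕ) [NeZero r] {ι : Type*} (s : Finset ι) (f : ι → ZMod r) :
    chiZ r (∑ j ∈ s, f j) = ∏ j ∈ s, chiZ r (f j) := by
  induction s using Finset.cons_induction with
  | empty => simp [chiZ_zero]
  | cons a s ha ih => rw [Finset.sum_cons, Finset.prod_cons, chiZ_add, ih]

lemma chiZ_ne_one (r : ℕ) [NeZero r] {c : ZMod r} (hc : c ≠ 0) : chiZ r c ≠ 1 := by
  intro h
  rw [chiZ, expu, Complex.exp_eq_one_iff] at h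
  obtain ⟨k, hk⟩ := h
  have h2 : (2 * (Real.pi:ℂ) * Complex.I : ℂ) ≠ 0 := by
    simp [Real.pi_ne_zero, Complex.I_ne_zero]
  have hx : ((c.val / r : ℝ) : ℂ) = (k : ℂ) := by
    have := hk
    rw [show ((k:ℂ) * (2 * Real.pi * Complex.I)) = (2 * (Real.pi:ℂ) * Complex.I) * k by ring] at this
    exact mul_left_cancel₀ h2 this
  have hxr : (c.val / r : ℝ) = (k : ℝ) := by exact_mod_cast hx
  have hr : (0:ℝ) < r := by exact_mod_cast Nat.pos_of_ne_zero (NeZero.ne r)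
  have h0 : (0:ℝ) ≤ (c.val / r : ℝ) := by positivity
  have h1 : (c.val / r : ℝ) < 1 := by
    rw [div_lt_one hr]
    exact_mod_cast ZMod.val_lt c
  have hk0 : k = 0 := by
    have a1 : (0:ℝ) ≤ (k:ℝ) := hxr ▸ h0
    have a2 : (k:ℝ) < 1 := hxr ▸ h1
    exact_mod_cast le_antisymm (by exact_mod_cast a2.le.trans_eq (by norm_num) |>.trans (le_refl 1) |> fun _ => (by exact_mod_cast Int.lt_add_one_iff.mp (by exact_mod_cast a2) : k ≤ 0)) (by exact_mod_cast a1)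
  rw [hk0] at hxr
  simp only [Int.cast_zero] at hxr
  have hv0 : (c.val : ℝ) = 0 := by
    rcases div_eq_zero_iff.mp hxr with h' | h'
    · exact h'
    · exact absurd h' hr.ne'
  have : c.val = 0 := Nat.cast_eq_zero.mp hv0
  exact hc ((ZMod.val_eq_zero c).mp this)

lemma sum_chiZ (r : ℕ) [NeZero r] (c : ZMod r) :
    ∑ a : ZMod r, chiZ r (a * c) = if c = 0 then (r:ℂ) else 0 := by
  split_ifs with h
  · subst h
    simp [chiZ_zero, Finset.card_univ, ZMod.card]
  · have key : chiZ r c * ∑ a : ZMod r, chiZ r (a * c) = ∑ a : ZMod r, chiZ r (a * c) := by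
      rw [Finset.mul_sum]
      refine Fintype.sum_equiv (Equiv.addRight 1) _ _ fun a => ?_
      simp only [Equiv.coe_addRight, add_mul, one_mul, chiZ_add]
      ring
    have h2 : (chiZ r c - 1) * ∑ a : ZMod r, chiZ r (a * c) = 0 := by
      rw [sub_mul, one_mul, key, sub_self]
    rcases mul_eq_zero.mp h2 with h3 | h3
    · exact absurd (sub_eq_zero.mp h3) (chiZ_ne_one r h)
    · exact h3

noncomputable def indZ (r : ℕ) [NeZero r] (a : ZMod r) : Fin r := ⟨a.val, ZMod.val_lt a⟩

lemma indZ_natCast (r : ℕ) [NeZero r] (a : ZMod r) : (((indZ r a : ℕ)) : ZMod r) = a := by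
  simp [indZ, ZMod.natCast_val, ZMod.cast_id]

lemma indZ_eq_iff (r : ℕ) [NeZero r] (a : ZMod r) (i : Fin r) :
    indZ r a = i ↔ a = ((i : ℕ) : ZMod r) := by
  constructor
  · rintro rfl; exact (indZ_natCast r a).symm
  · rintro rfl
    ext
    simp [indZ, ZMod.val_natCast_of_lt i.isLt]

lemma prod_tauZ (r : ℕ) [NeZero r] {n : ℕ} (f : Fin r → ℂ) (y : Fin n → ZMod r) :
    ∏ i : Fin r, f i ^ tauZ r i y = ∏ j : Fin n, f (indZ r (y j)) := by
  rw [← Finset.prod_fiberwise_of_maps_to (g := fun j => indZ r (y j))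
      (fun x _ => Finset.mem_univ _) (fun j => f (indZ r (y j)))]
  refine Finset.prod_congr rfl fun i _ => ?_
  have hcard : tauZ r i y = (Finset.univ.filter fun j => indZ r (y j) = i).card := by
    rw [tauZ]
    congr 1
    ext j
    simp [indZ_eq_iff]
  rw [hcard, ← Finset.prod_const]
  refine Finset.prod_congr rfl fun j hj => ?_
  rw [(Finset.mem_filter.mp hj).2]

lemma indZ_cast (r : ℕ) [NeZero r] (k : Fin r) : indZ r (((k : ℕ)) : ZMod r) = k := by
  ext; simp [indZ, ZMod.val_natCast_of_lt k.isLt]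

noncomputable def eZ (r : ℕ) [NeZero r] : Fin r ≃ ZMod r where
  toFun k := ((k : ℕ) : ZMod r)
  invFun := indZ r
  left_inv k := by ext; simp [indZ, ZMod.val_natCast_of_lt k.isLt]
  right_inv a := indZ_natCast r a

theorem stmt_17 (r n s : ℕ) [NeZero r] (hn : 0 < n) (hs : 0 < s)
    (H : Matrix (Fin s) (Fin n) (ZMod r))
    (hinj : Function.Injective (fun u : Fin s → ZMod r => Matrix.vecMul u H))
    (w : Fin r → ℂ) (v : Fin r → ℂ)
    (hv : ∀ i : Fin r, v i = ∑ k : Fin r, w k * expu (((i : ℕ) * (k : ℕ) : ℝ) / (r : ℝ))) :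
    ∑ x ∈ Finset.univ.filter (fun x : Fin n → ZMod r => H.mulVec x = 0),
        ∏ i : Fin r, w i ^ tauZ r i x
      = (1 / (r : ℂ) ^ s) *
          ∑ y ∈ Finset.image (fun u : Fin s → ZMod r => Matrix.vecMul u H) Finset.univ,
            ∏ i : Fin r, v i ^ tauZ r i y := by
  classical
  -- rewrite the image sum as a sum over all u
  rw [Finset.sum_image (fun a _ b _ h => hinj h)]
  -- expand v at indZ values
  have hv' : ∀ a : ZMod r, v (indZ r a) = ∑ k : Fin r, w k * chiZ r (a * ((k : ℕ) : ZMod r)) := by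
    intro a
    rw [hv]
    refine Finset.sum_congr rfl fun k _ => ?_
    congr 1
    have h1 : a * ((k : ℕ) : ZMod r) = (((indZ r a : ℕ) * (k : ℕ) : ℕ) : ZMod r) := by
      push_cast
      rw [indZ_natCast]
    rw [h1, chiZ_natCast]
    push_cast
    ring_nf
  have key : ∑ u : Fin s → ZMod r, ∏ i : Fin r, v i ^ tauZ r i (Matrix.vecMul u H)
      = (r:ℂ)^s * ∑ x ∈ Finset.univ.filter (fun x : Fin n → ZMod r => H.mulVec x = 0),
          ∏ i : Fin r, w i ^ tauZ r i x := by
    have step1 : ∀ u : Fin s → ZMod r,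
        ∏ i : Fin r, v i ^ tauZ r i (Matrix.vecMul u H)
          = ∑ x : Fin n → ZMod r,
              (∏ j : Fin n, w (indZ r (x j))) * chiZ r (dotProduct (Matrix.vecMul u H) x) := by
      intro u
      rw [prod_tauZ]
      calc ∏ j : Fin n, v (indZ r (Matrix.vecMul u H j))
          = ∏ j : Fin n, ∑ k : Fin r, w k * chiZ r (Matrix.vecMul u H j * ((k : ℕ) : ZMod r)) := by
            exact Finset.prod_congr rfl fun j _ => hv' _
        _ = ∑ g : Fin n → Fin r, ∏ j : Fin n,
              w (g j) * chiZ r (Matrix.vecMul u H j * ((g j : ℕ) : ZMod r)) := by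
            rw [Finset.prod_univ_sum, Fintype.piFinset_univ]
        _ = ∑ x : Fin n → ZMod r, ∏ j : Fin n,
              w (indZ r (x j)) * chiZ r (Matrix.vecMul u H j * x j) := by
            refine Fintype.sum_equiv (Equiv.piCongrRight fun _ => eZ r) _ _ fun g => ?_
            refine Finset.prod_congr rfl fun j _ => ?_
            simp only [Equiv.piCongrRight_apply, Pi.map_apply, eZ, Equiv.coe_fn_mk]
            rw [indZ_cast]
        _ = ∑ x : Fin n → ZMod r,
              (∏ j : Fin n, w (indZ r (x j))) * chiZ r (dotProduct (Matrix.vecMul u H) x) := by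
            refine Finset.sum_congr rfl fun x _ => ?_
            rw [Finset.prod_mul_distrib, dotProduct, chiZ_sum]
    calc ∑ u : Fin s → ZMod r, ∏ i : Fin r, v i ^ tauZ r i (Matrix.vecMul u H)
        = ∑ u : Fin s → ZMod r, ∑ x : Fin n → ZMod r,
            (∏ j : Fin n, w (indZ r (x j))) * chiZ r (dotProduct (Matrix.vecMul u H) x) := by
          exact Finset.sum_congr rfl fun u _ => step1 u
      _ = ∑ x : Fin n → ZMod r, (∏ j : Fin n, w (indZ r (x j)))
            * ∑ u : Fin s → ZMod r, chiZ r (dotProduct u (H.mulVec x)) := by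
          rw [Finset.sum_comm]
          refine Finset.sum_congr rfl fun x _ => ?_
          rw [Finset.mul_sum]
          refine Finset.sum_congr rfl fun u _ => ?_
          rw [← Matrix.dotProduct_mulVec]
      _ = ∑ x : Fin n → ZMod r, (∏ j : Fin n, w (indZ r (x j)))
            * (if H.mulVec x = 0 then (r:ℂ)^s else 0) := by
          refine Finset.sum_congr rfl fun x _ => ?_
          congr 1
          have : ∏ i : Fin s, ∑ a : ZMod r, chiZ r (a * H.mulVec x i)
              = ∑ u : Fin s → ZMod r, chiZ r (dotProduct u (H.mulVec x)) := by
            rw [Finset.prod_univ_sum, Fintype.piFinset_univ]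
            refine Finset.sum_congr rfl fun u _ => ?_
            rw [dotProduct, chiZ_sum]
          rw [← this]
          by_cases h : H.mulVec x = 0
          · simp only [h, if_true]
            rw [Finset.prod_congr rfl (fun i _ => by
              rw [show (0 : Fin s → ZMod r) i = 0 from rfl, sum_chiZ, if_pos rfl])]
            simp
          · simp only [h, if_false]
            obtain ⟨i, hi⟩ : ∃ i, H.mulVec x i ≠ 0 := by
              by_contra hc
              push_neg at hc
              exact h (funext hc)
            refine Finset.prod_eq_zero (Finset.mem_univ i) ?_
            rw [sum_chiZ, if_neg hi]
      _ = (r:ℂ)^s * ∑ x ∈ Finset.univ.filter (fun x : Fin n → ZMod r => H.mulVec x = 0),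
            ∏ i : Fin r, w i ^ tauZ r i x := by
          rw [Finset.sum_filter, Finset.mul_sum]
          refine Finset.sum_congr rfl fun x _ => ?_
          rw [prod_tauZ]
          split_ifs <;> ring
  rw [key]
  have hr : ((r:ℂ))^s ≠ 0 := pow_ne_zero _ (Nat.cast_ne_zero.mpr (NeZero.ne r))
  rw [one_div, inv_mul_cancel_left₀ hr]
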